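/- For real numbers a, b with 0 < b ≤ a ≤ 1, the binary divergence satisfies D(a‖b) = a·ln(a/b) + (1−a)·ln((1−a)/(1−b)) ≥ a·(max(ln(a/b) − 1, 0)). -/

import Mathlib

/-- Binary KL divergence lower bound: for 0 < b ≤ a ≤ 1,
D(a‖b) = a ln(a/b) + (1-a) ln((1-a)/(1-b)) ≥ a · [ln(a/b) - 1]₊. -/
theorem binary_kl_lower_bound (a b : ℝ) (hb : 0 < b) (hba : b ≤ a) (ha : a ≤ 1) :
    a * Real.log (a / b) + (1 - a) * Real.log ((1 - a) / (1 - b)) ≥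
      a * max (Real.log (a / b) - 1) 0 := by
  have ha0 : 0 < a := lt_of_lt_of_le hb hba
  -- key 1 : a * log (a/b) ≥ a - b
  have h1 : a - b ≤ a * Real.log (a / b) := by
    have hpos : 0 < b / a := div_pos hb ha0
    have := Real.log_le_sub_one_of_pos hpos
    have hlog : Real.log (b / a) = - Real.log (a / b) := by
      rw [← Real.log_inv, inv_div]
    rw [hlog] at this
    have : 1 - b / a ≤ Real.log (a / b) := by linarith
    have := mul_le_mul_of_nonneg_left this (le_of_lt ha0)
    have hba' : a * (1 - b / a) = a - b := by field_simp
    linarith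
  -- key 2 : (1-a) * log ((1-a)/(1-b)) ≥ b - a
  have h2 : b - a ≤ (1 - a) * Real.log ((1 - a) / (1 - b)) := by
    rcases eq_or_lt_of_le ha with rfl | ha1
    · simp only [sub_self, zero_mul]; linarith
    · have h1a : 0 < 1 - a := by linarith
      have h1b : 0 < 1 - b := by linarith
      have hpos : 0 < (1 - b) / (1 - a) := div_pos h1b h1a
      have := Real.log_le_sub_one_of_pos hpos
      have hlog : Real.log ((1 - b) / (1 - a)) = - Real.log ((1 - a) / (1 - b)) := by
        rw [← Real.log_inv, inv_div]
      rw [hlog] at this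
      have h' : 1 - (1 - b) / (1 - a) ≤ Real.log ((1 - a) / (1 - b)) := by linarith
      have := mul_le_mul_of_nonneg_left h' (le_of_lt h1a)
      have heq : (1 - a) * (1 - (1 - b) / (1 - a)) = b - a := by field_simp; ring
      linarith
  rcases le_or_gt (Real.log (a / b)) 1 with h | h
  · have : max (Real.log (a / b) - 1) 0 = 0 := max_eq_right (by linarith)
    rw [this, mul_zero]
    linarith
  · have : max (Real.log (a / b) - 1) 0 = Real.log (a / b) - 1 := max_eq_left (by linarith)
    rw [this]
    nlinarith
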